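/- For n ≥ 3, the pure braid group Kₙ satisfies (Kₙ, F_{n−1}) = (F_{n−1}, F_{n−1}), where F_{n−1} = ⟨x_{i1},…,x_{in}⟩ ≤ Kₙ is the free normal subgroup arising as kernel of the strand-forgetting map Kₙ → K_{n−1}. -/

import Mathlib

noncomputable section

open scoped commutatorElement

/-- Index type for the standard generators `x_{ij}` (`i < j`) of the pure braid group. -/
def BIdx (n : ℕ) := {p : Fin n × Fin n // p.1 < p.2}

/-- The generator `x_{ij}` in the free group. -/
def xg {n : ℕ} (i j : Fin n) (h : i < j) : FreeGroup (BIdx n) := FreeGroup.of ⟨(i, j), h⟩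

/-- The defining relations of the Artin pure braid group `Kₙ`:
`(a_{ijk}, x_{ij}) = (a_{ijk}, x_{ik}) = (a_{ijk}, x_{jk}) = 1` for `i<j<k`, where
`a_{ijk} = x_{ij} x_{ik} x_{jk}`, together with `(x_{ij}, x_{kl}) = (x_{il}, x_{jk}) = 1` and
`(x_{ik}, x_{ij}⁻¹ x_{jl} x_{ij}) = 1` for `i<j<k<l`. -/
def pureBraidRels (n : ℕ) : Set (FreeGroup (BIdx n)) :=
  {r | ∃ (i j k : Fin n) (hij : i < j) (hjk : j < k),
      r = ⁅xg i j hij * xg i k (hij.trans hjk) * xg j k hjk, xg i j hij⁆ ∨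
      r = ⁅xg i j hij * xg i k (hij.trans hjk) * xg j k hjk, xg i k (hij.trans hjk)⁆ ∨
      r = ⁅xg i j hij * xg i k (hij.trans hjk) * xg j k hjk, xg j k hjk⁆} ∪
  {r | ∃ (i j k l : Fin n) (hij : i < j) (hjk : j < k) (hkl : k < l),
      r = ⁅xg i j hij, xg k l hkl⁆ ∨
      r = ⁅xg i l ((hij.trans hjk).trans hkl), xg j k hjk⁆ ∨
      r = ⁅xg i k (hij.trans hjk), (xg i j hij)⁻¹ * xg j l (hjk.trans hkl) * xg i j hij⁆}

/-- The Artin pure braid group on `n` strands, via its standard presentation. -/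
def PureBraid (n : ℕ) := PresentedGroup (pureBraidRels n)

instance (n : ℕ) : Group (PureBraid n) := by unfold PureBraid; infer_instance

/-- The free subgroup `F_{n-1} = ⟨x_{i1}, …, x_{in}⟩` of `Kₙ` generated by the `x_{ab}`
with `a = i` or `b = i` (the kernel of forgetting the `i`-th strand). -/
def strandSubgroup (n : ℕ) (i : Fin n) : Subgroup (PureBraid n) :=
  Subgroup.closure
    {g | ∃ j : Fin n,
      (∃ h : i < j, g = PresentedGroup.mk (pureBraidRels n) (xg i j h)) ∨
      (∃ h : j < i, g = PresentedGroup.mk (pureBraidRels n) (xg j i h))}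


section Generic
variable {G : Type*} [Group G]

lemma conj_eq_of_commute {a b : G} (h : Commute a b) : a * b * a⁻¹ = b := by
  rw [h.eq, mul_inv_cancel_right]

/-- conjugation formulas in a triple with central product. -/
lemma conj_quad (b1 b2 b3 : G) (e1 : b1 * b2 * b3 = b2 * b3 * b1)
    (e2 : b1 * b2 * b3 = b3 * (b1 * b2)) :
    b1 * b2 * b1⁻¹ = b3⁻¹ * b2 * b3 ∧
    b1 * b3 * b1⁻¹ = (b2 * b3)⁻¹ * b3 * (b2 * b3) ∧
    b1⁻¹ * b2 * b1 = (b2 * b3) * b2 * (b2 * b3)⁻¹ ∧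
    b1⁻¹ * b3 * b1 = b2 * b3 * b2⁻¹ := by
  have h23 : b1 * (b2 * b3) * b1⁻¹ = b2 * b3 := by
    have : b1 * (b2 * b3) = (b2 * b3) * b1 := by
      calc b1 * (b2 * b3) = b1 * b2 * b3 := by group
        _ = b2 * b3 * b1 := e1
        _ = (b2 * b3) * b1 := by group
    rw [this, mul_inv_cancel_right]
  have f1 : b1 * b2 * b1⁻¹ = b3⁻¹ * b2 * b3 := by
    calc b1 * b2 * b1⁻¹ = b3⁻¹ * (b3 * (b1 * b2)) * b1⁻¹ := by group
      _ = b3⁻¹ * (b1 * b2 * b3) * b1⁻¹ := by rw [← e2]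
      _ = b3⁻¹ * (b2 * b3 * b1) * b1⁻¹ := by rw [e1]
      _ = b3⁻¹ * b2 * b3 := by group
  have f2 : b1 * b3 * b1⁻¹ = (b2 * b3)⁻¹ * b3 * (b2 * b3) := by
    calc b1 * b3 * b1⁻¹ = (b1 * b2 * b1⁻¹)⁻¹ * (b1 * (b2 * b3) * b1⁻¹) := by group
      _ = (b3⁻¹ * b2 * b3)⁻¹ * (b2 * b3) := by rw [f1, h23]
      _ = (b2 * b3)⁻¹ * b3 * (b2 * b3) := by group
  have f3 : b1⁻¹ * b2 * b1 = (b2 * b3) * b2 * (b2 * b3)⁻¹ := by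
    have key : b1 * ((b2 * b3) * b2 * (b2 * b3)⁻¹) * b1⁻¹ = b2 := by
      calc b1 * ((b2 * b3) * b2 * (b2 * b3)⁻¹) * b1⁻¹
          = (b1 * (b2 * b3) * b1⁻¹) * (b1 * b2 * b1⁻¹) * (b1 * (b2 * b3) * b1⁻¹)⁻¹ := by group
        _ = (b2 * b3) * (b3⁻¹ * b2 * b3) * (b2 * b3)⁻¹ := by rw [h23, f1]
        _ = b2 := by group
    calc b1⁻¹ * b2 * b1
        = b1⁻¹ * (b1 * ((b2 * b3) * b2 * (b2 * b3)⁻¹) * b1⁻¹) * b1 := by rw [key]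
      _ = (b2 * b3) * b2 * (b2 * b3)⁻¹ := by group
  have f4 : b1⁻¹ * b3 * b1 = b2 * b3 * b2⁻¹ := by
    have key : b1 * (b2 * b3 * b2⁻¹) * b1⁻¹ = b3 := by
      calc b1 * (b2 * b3 * b2⁻¹) * b1⁻¹
          = (b1 * b2 * b1⁻¹) * (b1 * b3 * b1⁻¹) * (b1 * b2 * b1⁻¹)⁻¹ := by group
        _ = (b3⁻¹ * b2 * b3) * ((b2 * b3)⁻¹ * b3 * (b2 * b3)) * (b3⁻¹ * b2 * b3)⁻¹ := by
            rw [f1, f2]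
        _ = b3 := by group
    calc b1⁻¹ * b3 * b1
        = b1⁻¹ * (b1 * (b2 * b3 * b2⁻¹) * b1⁻¹) * b1 := by rw [key]
      _ = b2 * b3 * b2⁻¹ := by group
  exact ⟨f1, f2, f3, f4⟩

lemma A2core {t u z : G} (h : Commute t (u⁻¹ * z * u)) :
    t * z * t⁻¹ = ((t * u * t⁻¹) * u⁻¹) * z * ((t * u * t⁻¹) * u⁻¹)⁻¹ := by
  have h' : t * (u⁻¹ * z * u) * t⁻¹ = u⁻¹ * z * u := conj_eq_of_commute h
  calc t * z * t⁻¹ = (t * u * t⁻¹) * (t * (u⁻¹ * z * u) * t⁻¹) * (t * u * t⁻¹)⁻¹ := by group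
    _ = (t * u * t⁻¹) * (u⁻¹ * z * u) * (t * u * t⁻¹)⁻¹ := by rw [h']
    _ = ((t * u * t⁻¹) * u⁻¹) * z * ((t * u * t⁻¹) * u⁻¹)⁻¹ := by group

lemma B1core {t u z : G} (h : Commute z (u⁻¹ * t * u)) :
    t * z * t⁻¹ = ((t * u⁻¹ * t⁻¹) * u) * z * ((t * u⁻¹ * t⁻¹) * u)⁻¹ := by
  have h' : (u⁻¹ * t * u) * z * (u⁻¹ * t * u)⁻¹ = z := conj_eq_of_commute h.symm
  calc t * z * t⁻¹
      = ((t * u⁻¹ * t⁻¹) * u) * ((u⁻¹ * t * u) * z * (u⁻¹ * t * u)⁻¹) *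
        ((t * u⁻¹ * t⁻¹) * u)⁻¹ := by group
    _ = ((t * u⁻¹ * t⁻¹) * u) * z * ((t * u⁻¹ * t⁻¹) * u)⁻¹ := by rw [h']

lemma B2core {t u z q : G} (h1 : Commute z (u⁻¹ * t * u))
    (h5 : u⁻¹ * z * u = (z * q) * z * (z * q)⁻¹)
    (h4 : u * (z * q) * u⁻¹ = z * q)
    (h3 : u * z * u⁻¹ = q⁻¹ * z * q) :
    t * z * t⁻¹ = ((t * q * t⁻¹) * q⁻¹) * z * ((t * q * t⁻¹) * q⁻¹)⁻¹ := by
  have h6 : t * (u * z * u⁻¹) * t⁻¹ = u * z * u⁻¹ := by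
    have h1' : (u⁻¹ * t * u) * z * (u⁻¹ * t * u)⁻¹ = z := conj_eq_of_commute h1.symm
    calc t * (u * z * u⁻¹) * t⁻¹
        = u * ((u⁻¹ * t * u) * z * (u⁻¹ * t * u)⁻¹) * u⁻¹ := by group
      _ = u * z * u⁻¹ := by rw [h1']
  have E : t * z * t⁻¹ =
      ((t * z * t⁻¹) * (t * q * t⁻¹)) * (u * z * u⁻¹) * ((t * z * t⁻¹) * (t * q * t⁻¹))⁻¹ := by
    calc t * z * t⁻¹ = t * (u * (u⁻¹ * z * u) * u⁻¹) * t⁻¹ := by group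
      _ = t * (u * ((z * q) * z * (z * q)⁻¹) * u⁻¹) * t⁻¹ := by rw [h5]
      _ = t * ((u * (z * q) * u⁻¹) * (u * z * u⁻¹) * (u * (z * q) * u⁻¹)⁻¹) * t⁻¹ := by group
      _ = t * ((z * q) * (u * z * u⁻¹) * (z * q)⁻¹) * t⁻¹ := by rw [h4]
      _ = (t * (z * q) * t⁻¹) * (t * (u * z * u⁻¹) * t⁻¹) * (t * (z * q) * t⁻¹)⁻¹ := by group
      _ = (t * (z * q) * t⁻¹) * (u * z * u⁻¹) * (t * (z * q) * t⁻¹)⁻¹ := by rw [h6]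
      _ = ((t * z * t⁻¹) * (t * q * t⁻¹)) * (u * z * u⁻¹) *
          ((t * z * t⁻¹) * (t * q * t⁻¹))⁻¹ := by group
  have E2 : t * z * t⁻¹ = (t * q * t⁻¹) * (u * z * u⁻¹) * (t * q * t⁻¹)⁻¹ := by
    have step : (t * z * t⁻¹)⁻¹ *
        (((t * z * t⁻¹) * (t * q * t⁻¹)) * (u * z * u⁻¹) *
          ((t * z * t⁻¹) * (t * q * t⁻¹))⁻¹) * (t * z * t⁻¹) =
        (t * q * t⁻¹) * (u * z * u⁻¹) * (t * q * t⁻¹)⁻¹ := by group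
    calc t * z * t⁻¹ = (t * z * t⁻¹)⁻¹ * (t * z * t⁻¹) * (t * z * t⁻¹) := by group
      _ = (t * z * t⁻¹)⁻¹ *
          (((t * z * t⁻¹) * (t * q * t⁻¹)) * (u * z * u⁻¹) *
            ((t * z * t⁻¹) * (t * q * t⁻¹))⁻¹) * (t * z * t⁻¹) := by rw [← E]
      _ = (t * q * t⁻¹) * (u * z * u⁻¹) * (t * q * t⁻¹)⁻¹ := step
  calc t * z * t⁻¹ = (t * q * t⁻¹) * (u * z * u⁻¹) * (t * q * t⁻¹)⁻¹ := E2
    _ = (t * q * t⁻¹) * (q⁻¹ * z * q) * (t * q * t⁻¹)⁻¹ := by rw [h3]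
    _ = ((t * q * t⁻¹) * q⁻¹) * z * ((t * q * t⁻¹) * q⁻¹)⁻¹ := by group

lemma conj_mem_closure_of {c : G} {S : Set G} {H : Subgroup G}
    (h : ∀ s ∈ S, c * s * c⁻¹ ∈ H) : ∀ f ∈ Subgroup.closure S, c * f * c⁻¹ ∈ H := by
  intro f hf
  induction hf using Subgroup.closure_induction with
  | mem x hx => exact h x hx
  | one => simpa using H.one_mem
  | mul x y hx hy ihx ihy =>
      have e : c * (x * y) * c⁻¹ = (c * x * c⁻¹) * (c * y * c⁻¹) := by group
      rw [e]; exact H.mul_mem ihx ihy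
  | inv x hx ih =>
      have e : c * x⁻¹ * c⁻¹ = (c * x * c⁻¹)⁻¹ := by group
      rw [e]; exact H.inv_mem ih

lemma tame_mul {F3 : Subgroup G} {z c d : G}
    (hc1 : ∀ f ∈ F3, c * f * c⁻¹ ∈ F3) (hc2 : ∃ v ∈ F3, c * z * c⁻¹ = v * z * v⁻¹)
    (hd1 : ∀ f ∈ F3, d * f * d⁻¹ ∈ F3) (hd2 : ∃ v ∈ F3, d * z * d⁻¹ = v * z * v⁻¹) :
    (∀ f ∈ F3, (c * d) * f * (c * d)⁻¹ ∈ F3) ∧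
      ∃ v ∈ F3, (c * d) * z * (c * d)⁻¹ = v * z * v⁻¹ := by
  constructor
  · intro f hf
    have e : (c * d) * f * (c * d)⁻¹ = c * (d * f * d⁻¹) * c⁻¹ := by group
    rw [e]; exact hc1 _ (hd1 f hf)
  · obtain ⟨v, hv, he⟩ := hd2
    obtain ⟨v', hv', he'⟩ := hc2
    refine ⟨(c * v * c⁻¹) * v', F3.mul_mem (hc1 v hv) hv', ?_⟩
    calc (c * d) * z * (c * d)⁻¹ = c * (d * z * d⁻¹) * c⁻¹ := by group
      _ = c * (v * z * v⁻¹) * c⁻¹ := by rw [he]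
      _ = (c * v * c⁻¹) * (c * z * c⁻¹) * (c * v * c⁻¹)⁻¹ := by group
      _ = (c * v * c⁻¹) * (v' * z * v'⁻¹) * (c * v * c⁻¹)⁻¹ := by rw [he']
      _ = ((c * v * c⁻¹) * v') * z * ((c * v * c⁻¹) * v')⁻¹ := by group

end Generic

section Generic2
variable {G : Type*} [Group G]

lemma conj_mem_closure_of' {c : G} {S : Set G} {H : Subgroup G}
    (h : ∀ s ∈ S, c⁻¹ * s * c ∈ H) : ∀ f ∈ Subgroup.closure S, c⁻¹ * f * c⁻¹⁻¹ ∈ H := by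
  have key : ∀ f ∈ Subgroup.closure S, c⁻¹ * f * c ∈ H := by
    intro f hf
    induction hf using Subgroup.closure_induction with
    | mem x hx => exact h x hx
    | one => simpa using H.one_mem
    | mul x y hx hy ihx ihy =>
        have e : c⁻¹ * (x * y) * c = (c⁻¹ * x * c) * (c⁻¹ * y * c) := by group
        rw [e]; exact H.mul_mem ihx ihy
    | inv x hx ih =>
        have e : c⁻¹ * x⁻¹ * c = (c⁻¹ * x * c)⁻¹ := by group
        rw [e]; exact H.inv_mem ih
  intro f hf
  have e : c⁻¹ * f * c⁻¹⁻¹ = c⁻¹ * f * c := by group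
  rw [e]; exact key f hf

end Generic2

section Generic3
variable {G : Type*} [Group G]

lemma conj_mem_closure_inv {c : G} {S : Set G} {H : Subgroup G}
    (h : ∀ s ∈ S, c⁻¹ * s * c ∈ H) : ∀ f ∈ Subgroup.closure S, c⁻¹ * f * c ∈ H := by
  intro f hf
  induction hf using Subgroup.closure_induction with
  | mem x hx => exact h x hx
  | one => simpa using H.one_mem
  | mul x y hx hy ihx ihy =>
      have e : c⁻¹ * (x * y) * c = (c⁻¹ * x * c) * (c⁻¹ * y * c) := by group
      rw [e]; exact H.mul_mem ihx ihy
  | inv x hx ih =>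
      have e : c⁻¹ * x⁻¹ * c = (c⁻¹ * x * c)⁻¹ := by group
      rw [e]; exact H.inv_mem ih

end Generic3

section PB
variable {n : ℕ}

def X (a b : Fin n) (h : a < b) : PureBraid n :=
  PresentedGroup.mk (pureBraidRels n) (xg a b h)

lemma comm_of_rel {u v : FreeGroup (BIdx n)} (h : ⁅u, v⁆ ∈ pureBraidRels n) :
    Commute (PresentedGroup.mk (pureBraidRels n) u) (PresentedGroup.mk (pureBraidRels n) v) := by
  have h1 : PresentedGroup.mk (pureBraidRels n) ⁅u, v⁆ = 1 :=
    (QuotientGroup.eq_one_iff _).mpr (Subgroup.subset_normalClosure h)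
  rw [map_commutatorElement] at h1
  exact commutatorElement_eq_one_iff_commute.mp h1

lemma crel_t1 {p q r : Fin n} (hpq : p < q) (hqr : q < r) :
    Commute (X p q hpq * X p r (hpq.trans hqr) * X q r hqr) (X p q hpq) := by
  have h := comm_of_rel (n := n) (Or.inl ⟨p, q, r, hpq, hqr, Or.inl rfl⟩)
  simp only [map_mul] at h
  exact h

lemma crel_t3 {p q r : Fin n} (hpq : p < q) (hqr : q < r) :
    Commute (X p q hpq * X p r (hpq.trans hqr) * X q r hqr) (X q r hqr) := by
  have h := comm_of_rel (n := n) (Or.inl ⟨p, q, r, hpq, hqr, Or.inr (Or.inr rfl)⟩)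
  simp only [map_mul] at h
  exact h

lemma crel_q1 {p q r s : Fin n} (hpq : p < q) (hqr : q < r) (hrs : r < s) :
    Commute (X p q hpq) (X r s hrs) := by
  have h := comm_of_rel (n := n) (Or.inr ⟨p, q, r, s, hpq, hqr, hrs, Or.inl rfl⟩)
  exact h

lemma crel_q2 {p q r s : Fin n} (hpq : p < q) (hqr : q < r) (hrs : r < s) :
    Commute (X p s ((hpq.trans hqr).trans hrs)) (X q r hqr) := by
  have h := comm_of_rel (n := n) (Or.inr ⟨p, q, r, s, hpq, hqr, hrs, Or.inr (Or.inl rfl)⟩)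
  exact h

lemma crel_q3 {p q r s : Fin n} (hpq : p < q) (hqr : q < r) (hrs : r < s) :
    Commute (X p r (hpq.trans hqr)) ((X p q hpq)⁻¹ * X q s (hqr.trans hrs) * X p q hpq) := by
  have h := comm_of_rel (n := n) (Or.inr ⟨p, q, r, s, hpq, hqr, hrs, Or.inr (Or.inr rfl)⟩)
  simp only [map_mul, map_inv] at h
  exact h

lemma triple_master {p q r : Fin n} (hpq : p < q) (hqr : q < r) :
    (X p q hpq * X p r (hpq.trans hqr) * (X p q hpq)⁻¹ =
      (X q r hqr)⁻¹ * X p r (hpq.trans hqr) * X q r hqr ∧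
     X p q hpq * X q r hqr * (X p q hpq)⁻¹ =
      (X p r (hpq.trans hqr) * X q r hqr)⁻¹ * X q r hqr * (X p r (hpq.trans hqr) * X q r hqr) ∧
     (X p q hpq)⁻¹ * X p r (hpq.trans hqr) * X p q hpq =
      (X p r (hpq.trans hqr) * X q r hqr) * X p r (hpq.trans hqr) *
        (X p r (hpq.trans hqr) * X q r hqr)⁻¹ ∧
     (X p q hpq)⁻¹ * X q r hqr * X p q hpq =
      X p r (hpq.trans hqr) * X q r hqr * (X p r (hpq.trans hqr))⁻¹) ∧
    (X p r (hpq.trans hqr) * X q r hqr * (X p r (hpq.trans hqr))⁻¹ =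
      (X p q hpq)⁻¹ * X q r hqr * X p q hpq ∧
     X p r (hpq.trans hqr) * X p q hpq * (X p r (hpq.trans hqr))⁻¹ =
      (X q r hqr * X p q hpq)⁻¹ * X p q hpq * (X q r hqr * X p q hpq) ∧
     (X p r (hpq.trans hqr))⁻¹ * X q r hqr * X p r (hpq.trans hqr) =
      (X q r hqr * X p q hpq) * X q r hqr * (X q r hqr * X p q hpq)⁻¹ ∧
     (X p r (hpq.trans hqr))⁻¹ * X p q hpq * X p r (hpq.trans hqr) =
      X q r hqr * X p q hpq * (X q r hqr)⁻¹) ∧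
    (X q r hqr * X p q hpq * (X q r hqr)⁻¹ =
      (X p r (hpq.trans hqr))⁻¹ * X p q hpq * X p r (hpq.trans hqr) ∧
     X q r hqr * X p r (hpq.trans hqr) * (X q r hqr)⁻¹ =
      (X p q hpq * X p r (hpq.trans hqr))⁻¹ * X p r (hpq.trans hqr) *
        (X p q hpq * X p r (hpq.trans hqr)) ∧
     (X q r hqr)⁻¹ * X p q hpq * X q r hqr =
      (X p q hpq * X p r (hpq.trans hqr)) * X p q hpq *
        (X p q hpq * X p r (hpq.trans hqr))⁻¹ ∧
     (X q r hqr)⁻¹ * X p r (hpq.trans hqr) * X q r hqr =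
      X p q hpq * X p r (hpq.trans hqr) * (X p q hpq)⁻¹) := by
  set b1 := X p q hpq
  set b2 := X p r (hpq.trans hqr)
  set b3 := X q r hqr
  have E1 : b1 * b2 * b3 = b2 * b3 * b1 := by
    have h : b1 * b2 * b3 * b1 = b1 * (b1 * b2 * b3) := (crel_t1 hpq hqr).eq
    exact mul_left_cancel (a := b1) (by rw [← h]; group)
  have E2 : b1 * b2 * b3 = b3 * (b1 * b2) := by
    have h : b1 * b2 * b3 * b3 = b3 * (b1 * b2 * b3) := (crel_t3 hpq hqr).eq
    exact mul_right_cancel (b := b3) (by rw [h]; group)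
  refine ⟨conj_quad b1 b2 b3 E1 E2, conj_quad b2 b3 b1 ?_ ?_, conj_quad b3 b1 b2 ?_ ?_⟩
  · calc b2 * b3 * b1 = b1 * b2 * b3 := E1.symm
      _ = b3 * (b1 * b2) := E2
      _ = b3 * b1 * b2 := by group
  · calc b2 * b3 * b1 = b1 * b2 * b3 := E1.symm
      _ = b1 * (b2 * b3) := by group
  · calc b3 * b1 * b2 = b3 * (b1 * b2) := by group
      _ = b1 * b2 * b3 := E2.symm
  · calc b3 * b1 * b2 = b1 * b2 * b3 := by rw [mul_assoc, ← E2]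
      _ = b2 * b3 * b1 := E1
      _ = b2 * (b3 * b1) := by group

end PB

section Leaves
variable {n : ℕ}

/-- the generating set of `strandSubgroup n i` -/
def SGenSet (i : Fin n) : Set (PureBraid n) :=
  {g | ∃ j : Fin n,
      (∃ h : i < j, g = PresentedGroup.mk (pureBraidRels n) (xg i j h)) ∨
      (∃ h : j < i, g = PresentedGroup.mk (pureBraidRels n) (xg j i h))}

lemma strand_eq (i : Fin n) : strandSubgroup n i = Subgroup.closure (SGenSet i) := rfl

lemma X_mem_left {i j : Fin n} (h : i < j) : X i j h ∈ strandSubgroup n i :=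
  Subgroup.subset_closure ⟨j, Or.inl ⟨h, rfl⟩⟩

lemma X_mem_right {i j : Fin n} (h : j < i) : X j i h ∈ strandSubgroup n i :=
  Subgroup.subset_closure ⟨j, Or.inr ⟨h, rfl⟩⟩

/-- both-direction conjugation property -/
def CP (i : Fin n) (t z : PureBraid n) : Prop :=
  (∃ w ∈ strandSubgroup n i, t * z * t⁻¹ = w * z * w⁻¹) ∧
  (∃ w ∈ strandSubgroup n i, t⁻¹ * z * t = w * z * w⁻¹)

lemma cp_of_comm {i : Fin n} {t z : PureBraid n} (h : Commute t z) : CP i t z := by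
  refine ⟨⟨1, one_mem _, ?_⟩, ⟨1, one_mem _, ?_⟩⟩
  · rw [conj_eq_of_commute h]; group
  · rw [h.inv_left.eq]; group

lemma leafL1 {i k l : Fin n} (hik : i < k) (hkl : k < l) :
    CP i (X k l hkl) (X i k hik) := by
  obtain ⟨-, -, ⟨c9, c10, c11, c12⟩⟩ := triple_master hik hkl
  constructor
  · exact ⟨(X i l (hik.trans hkl))⁻¹, inv_mem (X_mem_left _), by rw [c9]; group⟩
  · exact ⟨X i k hik * X i l (hik.trans hkl),
      mul_mem (X_mem_left _) (X_mem_left _), c11⟩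

lemma leafL2 {i k l : Fin n} (hik : i < k) (hkl : k < l) :
    CP i (X k l hkl) (X i l (hik.trans hkl)) := by
  obtain ⟨-, -, ⟨c9, c10, c11, c12⟩⟩ := triple_master hik hkl
  constructor
  · exact ⟨(X i k hik * X i l (hik.trans hkl))⁻¹,
      inv_mem (mul_mem (X_mem_left _) (X_mem_left _)), by rw [c10]; group⟩
  · exact ⟨X i k hik, X_mem_left _, c12⟩

lemma leafL3 {i k l : Fin n} (hki : k < i) (hil : i < l) :
    CP i (X k l (hki.trans hil)) (X k i hki) := by
  obtain ⟨-, ⟨c5, c6, c7, c8⟩, -⟩ := triple_master hki hil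
  constructor
  · exact ⟨(X i l hil * X k i hki)⁻¹,
      inv_mem (mul_mem (X_mem_left _) (X_mem_right _)), by rw [c6]; group⟩
  · exact ⟨X i l hil, X_mem_left _, c8⟩

lemma leafL4 {i k l : Fin n} (hki : k < i) (hil : i < l) :
    CP i (X k l (hki.trans hil)) (X i l hil) := by
  obtain ⟨-, ⟨c5, c6, c7, c8⟩, -⟩ := triple_master hki hil
  constructor
  · exact ⟨(X k i hki)⁻¹, inv_mem (X_mem_right _), by rw [c5]; group⟩
  · exact ⟨X i l hil * X k i hki, mul_mem (X_mem_left _) (X_mem_right _), c7⟩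

lemma leafL5 {i k l : Fin n} (hkl : k < l) (hli : l < i) :
    CP i (X k l hkl) (X k i (hkl.trans hli)) := by
  obtain ⟨⟨c1, c2, c3, c4⟩, -, -⟩ := triple_master hkl hli
  constructor
  · exact ⟨(X l i hli)⁻¹, inv_mem (X_mem_right _), by rw [c1]; group⟩
  · exact ⟨X k i (hkl.trans hli) * X l i hli,
      mul_mem (X_mem_right _) (X_mem_right _), c3⟩

lemma leafL6 {i k l : Fin n} (hkl : k < l) (hli : l < i) :
    CP i (X k l hkl) (X l i hli) := by
  obtain ⟨⟨c1, c2, c3, c4⟩, -, -⟩ := triple_master hkl hli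
  constructor
  · exact ⟨(X k i (hkl.trans hli) * X l i hli)⁻¹,
      inv_mem (mul_mem (X_mem_right _) (X_mem_right _)), by rw [c2]; group⟩
  · exact ⟨X k i (hkl.trans hli), X_mem_right _, c4⟩

end Leaves

section Leaves2
variable {n : ℕ}

lemma triple_E1comm {p q r : Fin n} (hpq : p < q) (hqr : q < r) :
    Commute (X p q hpq) (X p r (hpq.trans hqr) * X q r hqr) := by
  set b1 := X p q hpq
  set b2 := X p r (hpq.trans hqr)
  set b3 := X q r hqr
  have h : b1 * b2 * b3 * b1 = b1 * (b1 * b2 * b3) := (crel_t1 hpq hqr).eq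
  show b1 * (b2 * b3) = (b2 * b3) * b1
  exact mul_left_cancel (a := b1) (by
    calc b1 * (b1 * (b2 * b3)) = b1 * (b1 * b2 * b3) := by group
      _ = b1 * b2 * b3 * b1 := h.symm
      _ = b1 * ((b2 * b3) * b1) := by group)

lemma leafA1 {i k l b : Fin n} (hki : k < i) (hil : i < l) (hlb : l < b) :
    CP i (X k l (hki.trans hil)) (X i b (hil.trans hlb)) := by
  set u := X k i hki with hu
  set t := X k l (hki.trans hil) with ht
  set z := X i b (hil.trans hlb) with hz
  have h1 : Commute t (u⁻¹ * z * u) := crel_q3 hki hil hlb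
  obtain ⟨-, ⟨c5, c6, c7, c8⟩, -⟩ := triple_master hki hil
  constructor
  · have hm : t * u * t⁻¹ ∈ strandSubgroup n i := by
      rw [c6]
      exact mul_mem (mul_mem (inv_mem (mul_mem (X_mem_left hil) (X_mem_right hki)))
        (X_mem_right hki)) (mul_mem (X_mem_left hil) (X_mem_right hki))
    exact ⟨(t * u * t⁻¹) * u⁻¹, mul_mem hm (inv_mem (X_mem_right hki)), A2core h1⟩
  · have hm : t⁻¹ * u * t ∈ strandSubgroup n i := by
      rw [c8]
      exact mul_mem (mul_mem (X_mem_left hil) (X_mem_right hki)) (inv_mem (X_mem_left hil))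
    refine ⟨(t⁻¹ * u * t) * u⁻¹, mul_mem hm (inv_mem (X_mem_right hki)), ?_⟩
    calc t⁻¹ * z * t = t⁻¹ * z * t⁻¹⁻¹ := by group
      _ = ((t⁻¹ * u * t⁻¹⁻¹) * u⁻¹) * z * ((t⁻¹ * u * t⁻¹⁻¹) * u⁻¹)⁻¹ := A2core h1.inv_left
      _ = ((t⁻¹ * u * t) * u⁻¹) * z * ((t⁻¹ * u * t) * u⁻¹)⁻¹ := by group

lemma leafB1 {i k b l : Fin n} (hik : i < k) (hkb : k < b) (hbl : b < l) :
    CP i (X k l (hkb.trans hbl)) (X i b (hik.trans hkb)) := by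
  set u := X i k hik with hu
  set t := X k l (hkb.trans hbl) with ht
  set z := X i b (hik.trans hkb) with hz
  have h1 : Commute z (u⁻¹ * t * u) := crel_q3 hik hkb hbl
  obtain ⟨-, -, ⟨c9, c10, c11, c12⟩⟩ := triple_master hik (hkb.trans hbl)
  constructor
  · have hm : t * u⁻¹ * t⁻¹ ∈ strandSubgroup n i := by
      have e : t * u⁻¹ * t⁻¹ = (t * u * t⁻¹)⁻¹ := by group
      rw [e, c9]
      exact inv_mem (mul_mem (mul_mem (inv_mem (X_mem_left _)) (X_mem_left hik))
        (X_mem_left _))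
    exact ⟨(t * u⁻¹ * t⁻¹) * u, mul_mem hm (X_mem_left hik), B1core h1⟩
  · have h1' : Commute z (u⁻¹ * t⁻¹ * u) := by
      have h := h1.inv_right
      rwa [show (u⁻¹ * t * u)⁻¹ = u⁻¹ * t⁻¹ * u by group] at h
    have hm : t⁻¹ * u⁻¹ * t ∈ strandSubgroup n i := by
      have e : t⁻¹ * u⁻¹ * t = (t⁻¹ * u * t)⁻¹ := by group
      rw [e, c11]
      exact inv_mem (mul_mem (mul_mem (mul_mem (X_mem_left hik) (X_mem_left _))
        (X_mem_left hik)) (inv_mem (mul_mem (X_mem_left hik) (X_mem_left _))))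
    refine ⟨(t⁻¹ * u⁻¹ * t) * u, mul_mem hm (X_mem_left hik), ?_⟩
    calc t⁻¹ * z * t = t⁻¹ * z * t⁻¹⁻¹ := by group
      _ = ((t⁻¹ * u⁻¹ * t⁻¹⁻¹) * u) * z * ((t⁻¹ * u⁻¹ * t⁻¹⁻¹) * u)⁻¹ := B1core h1'
      _ = ((t⁻¹ * u⁻¹ * t) * u) * z * ((t⁻¹ * u⁻¹ * t) * u)⁻¹ := by group

lemma leafB2 {i m k l : Fin n} (hmk : m < k) (hki : k < i) (hil : i < l) :
    CP i (X k l (hki.trans hil)) (X m i (hmk.trans hki)) := by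
  set u := X m k hmk with hu
  set qe := X k i hki with hqe
  set t := X k l (hki.trans hil) with ht
  set z := X m i (hmk.trans hki) with hz
  have h1 : Commute z (u⁻¹ * t * u) := crel_q3 hmk hki hil
  obtain ⟨⟨a1, a2, a3, a4⟩, -, -⟩ := triple_master hmk hki
  have h5 : u⁻¹ * z * u = (z * qe) * z * (z * qe)⁻¹ := a3
  have h3 : u * z * u⁻¹ = qe⁻¹ * z * qe := a1
  have h4 : u * (z * qe) * u⁻¹ = z * qe := conj_eq_of_commute (triple_E1comm hmk hki)
  obtain ⟨-, ⟨b5, b6, b7, b8⟩, -⟩ := triple_master hki hil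
  constructor
  · have hm : t * qe * t⁻¹ ∈ strandSubgroup n i := by
      rw [b6]
      exact mul_mem (mul_mem (inv_mem (mul_mem (X_mem_left hil) (X_mem_right hki)))
        (X_mem_right hki)) (mul_mem (X_mem_left hil) (X_mem_right hki))
    exact ⟨(t * qe * t⁻¹) * qe⁻¹, mul_mem hm (inv_mem (X_mem_right hki)),
      B2core h1 h5 h4 h3⟩
  · have h1' : Commute z (u⁻¹ * t⁻¹ * u) := by
      have h := h1.inv_right
      rwa [show (u⁻¹ * t * u)⁻¹ = u⁻¹ * t⁻¹ * u by group] at h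
    have hm : t⁻¹ * qe * t ∈ strandSubgroup n i := by
      rw [b8]
      exact mul_mem (mul_mem (X_mem_left hil) (X_mem_right hki)) (inv_mem (X_mem_left hil))
    refine ⟨(t⁻¹ * qe * t) * qe⁻¹, mul_mem hm (inv_mem (X_mem_right hki)), ?_⟩
    calc t⁻¹ * z * t = t⁻¹ * z * t⁻¹⁻¹ := by group
      _ = ((t⁻¹ * qe * t⁻¹⁻¹) * qe⁻¹) * z * ((t⁻¹ * qe * t⁻¹⁻¹) * qe⁻¹)⁻¹ :=
          B2core h1' h5 h4 h3
      _ = ((t⁻¹ * qe * t) * qe⁻¹) * z * ((t⁻¹ * qe * t) * qe⁻¹)⁻¹ := by group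

end Leaves2

section LeafA2
variable {n : ℕ}

lemma leafA2 {i k m l : Fin n} (hkm : k < m) (hml : m < l) (hli : l < i) :
    CP i (X k l (hkm.trans hml)) (X m i (hml.trans hli)) := by
  set u := X k m hkm with hu
  set c := X m l hml with hc
  set t := X k l (hkm.trans hml) with ht
  set z := X m i (hml.trans hli) with hz
  set x1 := X k i (hkm.trans (hml.trans hli)) with hx1d
  set x3 := X l i hli with hx3d
  set F3 : Subgroup (PureBraid n) := Subgroup.closure {x1, z, x3} with hF3d
  have hx1 : x1 ∈ F3 := Subgroup.subset_closure (Or.inl rfl)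
  have hz3 : z ∈ F3 := Subgroup.subset_closure (Or.inr (Or.inl rfl))
  have hx3 : x3 ∈ F3 := Subgroup.subset_closure (Or.inr (Or.inr rfl))
  have hF3F : F3 ≤ strandSubgroup n i := by
    rw [hF3d]
    refine (Subgroup.closure_le _).2 ?_
    rintro x (rfl | rfl | rfl)
    · exact X_mem_right _
    · exact X_mem_right _
    · exact X_mem_right _
  obtain ⟨⟨a1, a2, a3, a4⟩, -, -⟩ := triple_master hkm (hml.trans hli)
  obtain ⟨⟨d1, d2, d3, d4⟩, -, -⟩ := triple_master hml hli
  have commQ1 : Commute u x3 := crel_q1 hkm hml hli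
  have commQ2 : Commute x1 c := crel_q2 hkm hml hli
  -- tame facts for u, u⁻¹, c, c⁻¹
  have hu1 : ∀ f ∈ F3, u * f * u⁻¹ ∈ F3 := by
    apply conj_mem_closure_of
    rintro s (rfl | rfl | rfl)
    · rw [a1]; exact mul_mem (mul_mem (inv_mem hz3) hx1) hz3
    · rw [a2]; exact mul_mem (mul_mem (inv_mem (mul_mem hx1 hz3)) hz3) (mul_mem hx1 hz3)
    · rw [conj_eq_of_commute commQ1]; exact hx3
  have hu2 : ∃ v ∈ F3, u * z * u⁻¹ = v * z * v⁻¹ :=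
    ⟨(x1 * z)⁻¹, inv_mem (mul_mem hx1 hz3), by rw [a2]; simp only [z, x1]; group⟩
  have hui1 : ∀ f ∈ F3, u⁻¹ * f * u⁻¹⁻¹ ∈ F3 := by
    apply conj_mem_closure_of'
    rintro s (rfl | rfl | rfl)
    · rw [a3]
      exact mul_mem (mul_mem (mul_mem hx1 hz3) hx1) (inv_mem (mul_mem hx1 hz3))
    · rw [a4]
      exact mul_mem (mul_mem hx1 hz3) (inv_mem hx1)
    · rw [commQ1.inv_left.eq, inv_mul_cancel_right]
      exact hx3
  have hui2 : ∃ v ∈ F3, u⁻¹ * z * u⁻¹⁻¹ = v * z * v⁻¹ :=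
    ⟨x1, hx1, by rw [show u⁻¹ * z * u⁻¹⁻¹ = u⁻¹ * z * u by group, a4]⟩
  have hc1 : ∀ f ∈ F3, c * f * c⁻¹ ∈ F3 := by
    apply conj_mem_closure_of
    rintro s (rfl | rfl | rfl)
    · rw [conj_eq_of_commute commQ2.symm]; exact hx1
    · rw [d1]; exact mul_mem (mul_mem (inv_mem hx3) hz3) hx3
    · rw [d2]; exact mul_mem (mul_mem (inv_mem (mul_mem hz3 hx3)) hx3) (mul_mem hz3 hx3)
  have hc2 : ∃ v ∈ F3, c * z * c⁻¹ = v * z * v⁻¹ :=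
    ⟨x3⁻¹, inv_mem hx3, by rw [d1]; simp only [z, x3]; group⟩
  have hci1 : ∀ f ∈ F3, c⁻¹ * f * c⁻¹⁻¹ ∈ F3 := by
    apply conj_mem_closure_of'
    rintro s (rfl | rfl | rfl)
    · rw [commQ2.symm.inv_left.eq, inv_mul_cancel_right]
      exact hx1
    · rw [d3]
      exact mul_mem (mul_mem (mul_mem hz3 hx3) hz3) (inv_mem (mul_mem hz3 hx3))
    · rw [d4]
      exact mul_mem (mul_mem hz3 hx3) (inv_mem hz3)
  have hci2 : ∃ v ∈ F3, c⁻¹ * z * c⁻¹⁻¹ = v * z * v⁻¹ :=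
    ⟨z * x3, mul_mem hz3 hx3, by rw [show c⁻¹ * z * c⁻¹⁻¹ = c⁻¹ * z * c by group, d3]⟩
  have h1 : Commute t (u⁻¹ * z * u) := crel_q3 hkm hml hli
  obtain ⟨-, ⟨e5, e6, e7, e8⟩, -⟩ := triple_master hkm hml
  constructor
  · -- forward
    have T1 := tame_mul hu1 hu2 hc1 hc2
    have T2 := tame_mul hci1 hci2 T1.1 T1.2
    have T3 := tame_mul hui1 hui2 T2.1 T2.2
    obtain ⟨v, hv, he⟩ := T3.2
    refine ⟨v, hF3F hv, ?_⟩
    calc t * z * t⁻¹ = ((t * u * t⁻¹) * u⁻¹) * z * ((t * u * t⁻¹) * u⁻¹)⁻¹ := A2core h1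
      _ = (u⁻¹ * (c⁻¹ * (u * c))) * z * (u⁻¹ * (c⁻¹ * (u * c)))⁻¹ := by rw [e6]; simp only [u, c, z]; group
      _ = v * z * v⁻¹ := he
  · -- inverse
    have T1 := tame_mul hci1 hci2 hui1 hui2
    have T2 := tame_mul hu1 hu2 T1.1 T1.2
    have T3 := tame_mul hc1 hc2 T2.1 T2.2
    obtain ⟨v, hv, he⟩ := T3.2
    refine ⟨v, hF3F hv, ?_⟩
    calc t⁻¹ * z * t = t⁻¹ * z * t⁻¹⁻¹ := by group
      _ = ((t⁻¹ * u * t⁻¹⁻¹) * u⁻¹) * z * ((t⁻¹ * u * t⁻¹⁻¹) * u⁻¹)⁻¹ := A2core h1.inv_left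
      _ = ((t⁻¹ * u * t) * u⁻¹) * z * ((t⁻¹ * u * t) * u⁻¹)⁻¹ := by group
      _ = (c * (u * (c⁻¹ * u⁻¹))) * z * (c * (u * (c⁻¹ * u⁻¹)))⁻¹ := by rw [e8]; simp only [u, c, z]; group
      _ = v * z * v⁻¹ := he

end LeafA2

section Dispatcher
variable {n : ℕ}

lemma gen_conj (i k l : Fin n) (hkl : k < l) {g : PureBraid n} (hg : g ∈ SGenSet i) :
    CP i (X k l hkl) g := by
  by_cases hki : k = i
  · subst hki
    exact ⟨⟨X k l hkl, X_mem_left hkl, rfl⟩,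
      ⟨(X k l hkl)⁻¹, inv_mem (X_mem_left hkl), by group⟩⟩
  by_cases hli : l = i
  · subst hli
    exact ⟨⟨X k l hkl, X_mem_right hkl, rfl⟩,
      ⟨(X k l hkl)⁻¹, inv_mem (X_mem_right hkl), by group⟩⟩
  obtain ⟨m, hm | hm⟩ := hg
  · obtain ⟨him, rfl⟩ := hm
    rcases lt_trichotomy m k with h1 | h1 | h1
    · exact cp_of_comm (crel_q1 him h1 hkl).symm
    · subst h1
      exact leafL1 him hkl
    · rcases lt_trichotomy m l with h2 | h2 | h2
      · rcases lt_trichotomy i k with h3 | h3 | h3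
        · exact leafB1 h3 h1 h2
        · exact absurd h3.symm hki
        · exact cp_of_comm (crel_q2 h3 him h2)
      · subst h2
        rcases lt_trichotomy i k with h3 | h3 | h3
        · exact leafL2 h3 hkl
        · exact absurd h3.symm hki
        · exact leafL4 h3 him
      · rcases lt_trichotomy i k with h3 | h3 | h3
        · exact cp_of_comm (crel_q2 h3 hkl h2).symm
        · exact absurd h3.symm hki
        · rcases lt_trichotomy i l with h4 | h4 | h4
          · exact leafA1 h3 h4 h2
          · exact absurd h4.symm hli
          · exact cp_of_comm (crel_q1 hkl h4 him)
  · obtain ⟨hmi, rfl⟩ := hm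
    rcases lt_trichotomy i k with h1 | h1 | h1
    · exact cp_of_comm (crel_q1 hmi h1 hkl).symm
    · exact absurd h1.symm hki
    · rcases lt_trichotomy m k with h2 | h2 | h2
      · rcases lt_trichotomy i l with h3 | h3 | h3
        · exact leafB2 h2 h1 h3
        · exact absurd h3.symm hli
        · exact cp_of_comm (crel_q2 h2 hkl h3).symm
      · subst h2
        rcases lt_trichotomy i l with h3 | h3 | h3
        · exact leafL3 h1 h3
        · exact absurd h3.symm hli
        · exact leafL5 hkl h3
      · rcases lt_trichotomy m l with h3 | h3 | h3
        · rcases lt_trichotomy i l with h4 | h4 | h4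
          · exact cp_of_comm (crel_q2 h2 hmi h4)
          · exact absurd h4.symm hli
          · exact leafA2 h2 h3 h4
        · subst h3
          exact leafL6 hkl hmi
        · exact cp_of_comm (crel_q1 hkl h3 hmi)

end Dispatcher

section Assembly
variable {n : ℕ}

lemma conj_X_mem (i k l : Fin n) (hkl : k < l) :
    ∀ f ∈ strandSubgroup n i, X k l hkl * f * (X k l hkl)⁻¹ ∈ strandSubgroup n i := by
  intro f hf
  have hf' : f ∈ Subgroup.closure (SGenSet i) := hf
  refine conj_mem_closure_of ?_ f hf'
  intro s hs
  obtain ⟨⟨w, hw, he⟩, -⟩ := gen_conj i k l hkl hs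
  rw [he]
  exact mul_mem (mul_mem hw (Subgroup.subset_closure hs)) (inv_mem hw)

lemma conj_Xinv_mem (i k l : Fin n) (hkl : k < l) :
    ∀ f ∈ strandSubgroup n i, (X k l hkl)⁻¹ * f * X k l hkl ∈ strandSubgroup n i := by
  intro f hf
  have hf' : f ∈ Subgroup.closure (SGenSet i) := hf
  refine conj_mem_closure_inv ?_ f hf'
  intro s hs
  obtain ⟨-, ⟨w, hw, he⟩⟩ := gen_conj i k l hkl hs
  rw [he]
  exact mul_mem (mul_mem hw (Subgroup.subset_closure hs)) (inv_mem hw)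

lemma strand_normal (i : Fin n) : (strandSubgroup n i).Normal := by
  refine ⟨fun f hf g => ?_⟩
  let H : Subgroup (PureBraid n) :=
    { carrier := {g | ∀ f ∈ strandSubgroup n i,
        g * f * g⁻¹ ∈ strandSubgroup n i ∧ g⁻¹ * f * g ∈ strandSubgroup n i},
      one_mem' := by
        intro f hf
        constructor
        · simpa using hf
        · simpa using hf
      mul_mem' := by
        intro a b ha hb f hf
        constructor
        · have e : (a * b) * f * (a * b)⁻¹ = a * (b * f * b⁻¹) * a⁻¹ := by group
          rw [e]; exact (ha _ ((hb f hf).1)).1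
        · have e : (a * b)⁻¹ * f * (a * b) = b⁻¹ * (a⁻¹ * f * a) * b := by group
          rw [e]; exact (hb _ ((ha f hf).2)).2
      inv_mem' := by
        intro a ha f hf
        constructor
        · have e : a⁻¹ * f * a⁻¹⁻¹ = a⁻¹ * f * a := by group
          rw [e]; exact (ha f hf).2
        · have e : a⁻¹⁻¹ * f * a⁻¹ = a * f * a⁻¹ := by group
          rw [e]; exact (ha f hf).1 }
  have hgen : ∀ j : BIdx n, PresentedGroup.of (rels := pureBraidRels n) j ∈ H := by
    rintro ⟨⟨a, b⟩, hab⟩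
    intro f hf
    exact ⟨conj_X_mem i a b hab f hf, conj_Xinv_mem i a b hab f hf⟩
  exact (PresentedGroup.generated_by (pureBraidRels n) H hgen g f hf).1

end Assembly


/-- for `n ≥ 3` and any strand `i`, one has
`(Kₙ, F_{n−1}) = (F_{n−1}, F_{n−1})` where `F_{n−1} = ⟨x_{i1}, …, x_{in}⟩ ≤ Kₙ`. -/
theorem pureBraid_commutator_strand (n : ℕ) (hn : 3 ≤ n) (i : Fin n) :
    ⁅(⊤ : Subgroup (PureBraid n)), strandSubgroup n i⁆ =
      ⁅strandSubgroup n i, strandSubgroup n i⁆ := by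
  haveI hN : (strandSubgroup n i).Normal := strand_normal i
  haveI hDN : Subgroup.Normal ⁅strandSubgroup n i, strandSubgroup n i⁆ :=
    Subgroup.commutator_normal _ _
  apply le_antisymm
  · rw [Subgroup.commutator_le]
    intro g hg f hf
    let H2 : Subgroup (PureBraid n) :=
      { carrier := {g | ∀ f ∈ strandSubgroup n i,
          ⁅g, f⁆ ∈ ⁅strandSubgroup n i, strandSubgroup n i⁆},
        one_mem' := by
          intro f hf
          have e : ⁅(1 : PureBraid n), f⁆ = 1 := by
            simp only [commutatorElement_def]; group
          rw [e]; exact one_mem _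
        mul_mem' := by
          intro a b ha hb f hf
          have e : ⁅a * b, f⁆ = (a * ⁅b, f⁆ * a⁻¹) * ⁅a, f⁆ := by
            simp only [commutatorElement_def]; group
          rw [e]
          exact mul_mem (hDN.conj_mem _ (hb f hf) a) (ha f hf)
        inv_mem' := by
          intro a ha f hf
          have e : ⁅a⁻¹, f⁆ = a⁻¹ * ⁅a, f⁆⁻¹ * a⁻¹⁻¹ := by
            simp only [commutatorElement_def]; group
          rw [e]
          exact hDN.conj_mem _ (inv_mem (ha f hf)) a⁻¹ }
    have hgen : ∀ j : BIdx n, PresentedGroup.of (rels := pureBraidRels n) j ∈ H2 := by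
      rintro ⟨⟨a, b⟩, hab⟩
      show ∀ f ∈ strandSubgroup n i,
        ⁅X a b hab, f⁆ ∈ ⁅strandSubgroup n i, strandSubgroup n i⁆
      intro f hf
      have hf' : f ∈ Subgroup.closure (SGenSet i) := hf
      clear hf
      induction hf' using Subgroup.closure_induction with
      | mem s hs =>
          obtain ⟨⟨w, hw, he⟩, -⟩ := gen_conj i a b hab hs
          have e : ⁅X a b hab, s⁆ = ⁅w, s⁆ := by
            simp only [commutatorElement_def]
            rw [he]
          rw [e]
          exact Subgroup.commutator_mem_commutator hw (Subgroup.subset_closure hs)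
      | one =>
          have e : ⁅X a b hab, (1 : PureBraid n)⁆ = 1 := by
            simp only [commutatorElement_def]; group
          rw [e]; exact one_mem _
      | mul x y hx hy ihx ihy =>
          have e : ⁅X a b hab, x * y⁆ = ⁅X a b hab, x⁆ * (x * ⁅X a b hab, y⁆ * x⁻¹) := by
            simp only [commutatorElement_def]; group
          rw [e]; exact mul_mem ihx (hDN.conj_mem _ ihy x)
      | inv x hx ih =>
          have e : ⁅X a b hab, x⁻¹⁆ = x⁻¹ * ⁅X a b hab, x⁆⁻¹ * x⁻¹⁻¹ := by
            simp only [commutatorElement_def]; group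
          rw [e]; exact hDN.conj_mem _ (inv_mem ih) x⁻¹
    exact PresentedGroup.generated_by (pureBraidRels n) H2 hgen g f hf
  · exact Subgroup.commutator_mono le_top le_rfl

end
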